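/- Let A and B be independent nonnegative random variables on a probability space with B integrable. Then E[min(1, AB)] ≤ E[min(1, A)] − (1 − E[B])·E[A·𝟙(A < 1)], where 𝟙(A < 1) is the indicator of the event {A < 1}. -/

import Mathlib

open MeasureTheory ProbabilityTheory

/-- For independent nonnegative random variables `A`, `B` with `B` integrable,
`E[min(1, A*B)] ≤ E[min(1, A)] - (1 - E[B]) * E[A * 𝟙(A < 1)]`. -/
theorem expectation_min_one_mul_le
    {Ω : Type*} [MeasurableSpace Ω] (μ : Measure Ω) [IsProbabilityMeasure μ]
    (A B : Ω → ℝ) (hA : Measurable A) (hB : Measurable B)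
    (hA0 : ∀ ω, 0 ≤ A ω) (hB0 : ∀ ω, 0 ≤ B ω)
    (hBint : Integrable B μ) (hind : IndepFun A B μ) :
    ∫ ω, min 1 (A ω * B ω) ∂μ ≤
      (∫ ω, min 1 (A ω) ∂μ) -
        (1 - ∫ ω, B ω ∂μ) * ∫ ω, A ω * (if A ω < 1 then (1 : ℝ) else 0) ∂μ := by
  set f : ℝ → ℝ := fun x => x * (if x < 1 then (1 : ℝ) else 0) with hf
  have hfm : Measurable f := by
    apply Measurable.mul measurable_id
    exact Measurable.ite (measurableSet_lt measurable_id measurable_const)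
      measurable_const measurable_const
  have hG : Measurable (fun ω => f (A ω)) := hfm.comp hA
  have hGbound : ∀ ω, |f (A ω)| ≤ 1 := by
    intro ω
    simp only [hf]
    split_ifs with h
    · rw [mul_one, abs_of_nonneg (hA0 ω)]; exact (h.le)
    · simp
  have hGint : Integrable (fun ω => f (A ω)) μ :=
    (integrable_const (1:ℝ)).mono' hG.aestronglyMeasurable (ae_of_all _ hGbound)
  have hindG : IndepFun (fun ω => f (A ω)) B μ :=
    hind.comp hfm measurable_id
  have hGBint : Integrable (fun ω => f (A ω) * B ω) μ := hindG.integrable_mul hGint hBint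
  have hmulint : ∫ ω, f (A ω) * B ω ∂μ = (∫ ω, f (A ω) ∂μ) * ∫ ω, B ω ∂μ :=
    hindG.integral_mul_eq_mul_integral hGint.aestronglyMeasurable hBint.aestronglyMeasurable
  have h1int : Integrable (fun ω => min 1 (A ω * B ω)) μ := by
    refine (integrable_const (1:ℝ)).mono'
      ((measurable_const.min (hA.mul hB)).aestronglyMeasurable) (ae_of_all _ fun ω => ?_)
    rw [Real.norm_eq_abs, abs_of_nonneg (le_min zero_le_one (mul_nonneg (hA0 ω) (hB0 ω)))]
    exact min_le_left _ _
  have h2int : Integrable (fun ω => min 1 (A ω)) μ := by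
    refine (integrable_const (1:ℝ)).mono'
      ((measurable_const.min hA).aestronglyMeasurable) (ae_of_all _ fun ω => ?_)
    rw [Real.norm_eq_abs, abs_of_nonneg (le_min zero_le_one (hA0 ω))]
    exact min_le_left _ _
  have hpt : ∀ ω, min 1 (A ω * B ω) ≤
      min 1 (A ω) + (f (A ω) * B ω - f (A ω)) := by
    intro ω
    simp only [hf]
    by_cases h : A ω < 1
    · simp only [if_pos h, mul_one]
      rw [min_eq_right h.le]
      have : A ω + (A ω * B ω - A ω) = A ω * B ω := by ring
      rw [this]
      exact min_le_right _ _
    · simp only [if_neg h, mul_zero, zero_mul, sub_zero, add_zero]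
      rw [min_eq_left (not_lt.mp h)]
      exact min_le_left _ _
  have hmono : ∫ ω, min 1 (A ω * B ω) ∂μ ≤
      ∫ ω, (min 1 (A ω) + (f (A ω) * B ω - f (A ω))) ∂μ := by
    have hsub : Integrable (fun ω => f (A ω) * B ω - f (A ω)) μ := hGBint.sub hGint
    exact integral_mono h1int (h2int.add hsub) hpt
  have heq : ∫ ω, (min 1 (A ω) + (f (A ω) * B ω - f (A ω))) ∂μ =
      (∫ ω, min 1 (A ω) ∂μ) - (1 - ∫ ω, B ω ∂μ) * ∫ ω, f (A ω) ∂μ := by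
    have hsub : Integrable (fun ω => f (A ω) * B ω - f (A ω)) μ := hGBint.sub hGint
    rw [integral_add h2int hsub, integral_sub hGBint hGint, hmulint]
    ring
  calc ∫ ω, min 1 (A ω * B ω) ∂μ ≤ _ := hmono
    _ = _ := heq
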